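/- Let T be a triangulated category and C a cosilting object, with associated t-structure ({}^{⊥≤0}C, {}^{⊥>0}C) and heart H_C. Then H⁰_C(C) is an injective cogenerator of H_C: it is injective in the abelian category H_C, and every nonzero object N of H_C admits a nonzero morphism N → H⁰_C(C); moreover Hom_{H_C}(N, H⁰_C(C)) ≅ Hom_T(N, C) for every N in the heart. -/

import Mathlib

open CategoryTheory Limits Pretriangulated

universe v u

variable {C : Type u} [Category.{v} C] [Preadditive C] [HasZeroObject C] [HasShift C ℤ]
  [∀ n : ℤ, (shiftFunctor C n).Additive] [Pretriangulated C]

/-- `X` is a direct summand (retract) of `Y`. -/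
def IsSummand {C : Type u} [Category.{v} C] (X Y : C) : Prop :=
  ∃ (i : X ⟶ Y) (r : Y ⟶ X), i ≫ r = 𝟙 X

/-- A torsion pair `(𝒰, 𝒱)` in a triangulated category: both classes are closed under
direct summands, all morphisms from `𝒰` to `𝒱` vanish, and every object fits
in a triangle `U ⟶ X ⟶ V ⟶ U⟦1⟧` with `U ∈ 𝒰` and `V ∈ 𝒱`. -/
structure TorsionPair (𝒰 𝒱 : Set C) : Prop where
  summand_left : ∀ ⦃X Y : C⦄, IsSummand X Y → Y ∈ 𝒰 → X ∈ 𝒰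
  summand_right : ∀ ⦃X Y : C⦄, IsSummand X Y → Y ∈ 𝒱 → X ∈ 𝒱
  hom_zero : ∀ ⦃X Y : C⦄, X ∈ 𝒰 → Y ∈ 𝒱 → ∀ f : X ⟶ Y, f = 0
  exists_triangle : ∀ X : C, ∃ (U V : C) (_ : U ∈ 𝒰) (_ : V ∈ 𝒱)
    (f : U ⟶ X) (g : X ⟶ V) (h : V ⟶ U⟦(1 : ℤ)⟧), Triangle.mk f g h ∈ distTriang C

/-- Functorial truncation data for a torsion pair `(𝒰, 𝒱)`: truncation functors `u` and `v`,
right resp. left adjoint to the inclusions, with counit `ι`, unit `π` and connecting maps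
forming the truncation triangles `u(X) ⟶ X ⟶ v(X) ⟶ u(X)⟦1⟧`. -/
structure TruncationFunctors (𝒰 𝒱 : Set C) where
  u : C ⥤ C
  v : C ⥤ C
  ι : u ⟶ 𝟭 C
  π : 𝟭 C ⟶ v
  δ : ∀ X : C, v.obj X ⟶ (u.obj X)⟦(1 : ℤ)⟧
  mem_u : ∀ X : C, u.obj X ∈ 𝒰
  mem_v : ∀ X : C, v.obj X ∈ 𝒱
  triangle : ∀ X : C, Triangle.mk (ι.app X) (π.app X) (δ X) ∈ distTriang C
  adj_u : ∀ (A X : C), A ∈ 𝒰 → Function.Bijective (fun g : A ⟶ u.obj X => g ≫ ι.app X)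
  adj_v : ∀ (X B : C), B ∈ 𝒱 → Function.Bijective (fun g : v.obj X ⟶ B => π.app X ≫ g)

/-- The cohomological functor `H⁰(X) = v(u(X⟦1⟧)⟦-1⟧)` associated to a t-structure with
truncation functors `d`. -/
def H0 {𝒰 𝒱 : Set C} (d : TruncationFunctors 𝒰 𝒱) : C ⥤ C :=
  shiftFunctor C (1 : ℤ) ⋙ d.u ⋙ shiftFunctor C (-1 : ℤ) ⋙ d.v


/-- `{}^{⊥>0}M`: objects `Y` with `Hom(Y, M[i]) = 0` for all `i > 0`. -/
def leftPerpGT (M : C) : Set C := {Y : C | ∀ i : ℤ, 0 < i → ∀ f : Y ⟶ M⟦i⟧, f = 0}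

/-- `{}^{⊥≤0}M`: objects `Y` with `Hom(Y, M[i]) = 0` for all `i ≤ 0`. -/
def leftPerpLE (M : C) : Set C := {Y : C | ∀ i : ℤ, i ≤ 0 → ∀ f : Y ⟶ M⟦i⟧, f = 0}

/-- `M` is cosilting if `({}^{⊥≤0}M, {}^{⊥>0}M)` is a t-structure and `M ∈ {}^{⊥>0}M`. -/
def IsCosilting (M : C) : Prop :=
  TorsionPair (leftPerpLE M) (leftPerpGT M) ∧
    (∀ X ∈ leftPerpLE M, X⟦(1 : ℤ)⟧ ∈ leftPerpLE M) ∧ M ∈ leftPerpGT M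

/-- The heart `𝒰⟦-1⟧ ∩ 𝒱` of the t-structure `(𝒰, 𝒱)`. -/
def heart (𝒰 𝒱 : Set C) : Set C := {X : C | X⟦(1 : ℤ)⟧ ∈ 𝒰 ∧ X ∈ 𝒱}

lemma shift_map_zero' {X Y : C} (m : ℤ) (f : X ⟶ Y)
    (h : (shiftFunctor C m).map f = 0) : f = 0 :=
  (shiftFunctor C m).map_injective (by rw [h, Functor.map_zero])

lemma hom_to_neg_shift_zero {X Y : C} (h : ∀ g : X⟦(1:ℤ)⟧ ⟶ Y, g = 0)
    (f : X ⟶ Y⟦(-1:ℤ)⟧) : f = 0 := by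
  apply shift_map_zero' 1
  set e : Y⟦(-1:ℤ)⟧⟦(1:ℤ)⟧ ≅ Y :=
    (shiftFunctorCompIsoId C (-1:ℤ) (1:ℤ) (by omega)).app Y with he
  have h0 : (shiftFunctor C (1:ℤ)).map f ≫ e.hom = 0 :=
    h ((shiftFunctor C (1:ℤ)).map f ≫ e.hom)
  rw [← Category.comp_id ((shiftFunctor C (1:ℤ)).map f), ← e.hom_inv_id,
    ← Category.assoc, h0, zero_comp]

lemma hom_from_neg_shift_zero {X Y : C} (h : ∀ g : X ⟶ Y⟦(1:ℤ)⟧, g = 0)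
    (f : X⟦(-1:ℤ)⟧ ⟶ Y) : f = 0 := by
  apply shift_map_zero' 1
  set e : X⟦(-1:ℤ)⟧⟦(1:ℤ)⟧ ≅ X :=
    (shiftFunctorCompIsoId C (-1:ℤ) (1:ℤ) (by omega)).app X with he
  have h0 : e.inv ≫ (shiftFunctor C (1:ℤ)).map f = 0 :=
    h (e.inv ≫ (shiftFunctor C (1:ℤ)).map f)
  rw [← Category.id_comp ((shiftFunctor C (1:ℤ)).map f), ← e.hom_inv_id,
    Category.assoc, h0, comp_zero]

lemma hom_shift_succ_zero {X M : C} (i : ℤ) (h : ∀ g : X ⟶ M⟦i+1⟧, g = 0)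
    (f : X ⟶ M⟦i⟧⟦(1:ℤ)⟧) : f = 0 := by
  set e : M⟦i+1⟧ ≅ M⟦i⟧⟦(1:ℤ)⟧ := (shiftFunctorAdd' C i 1 (i+1) rfl).app M with he
  have h0 : f ≫ e.inv = 0 := h (f ≫ e.inv)
  rw [← Category.comp_id f, ← e.inv_hom_id, ← Category.assoc, h0, zero_comp]

lemma leftPerpGT_shift_neg {M X : C} (h : X ∈ leftPerpGT M) :
    X⟦(-1:ℤ)⟧ ∈ leftPerpGT M := by
  intro i hi f
  refine hom_from_neg_shift_zero (fun g => ?_) f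
  exact hom_shift_succ_zero i (fun g' => h (i+1) (by omega) g') g

lemma leftPerpLE_hom_neg {M N : C} (h : N⟦(1:ℤ)⟧ ∈ leftPerpLE M) {i : ℤ} (hi : i < 0)
    (f : N ⟶ M⟦i⟧) : f = 0 := by
  apply shift_map_zero' 1
  exact hom_shift_succ_zero i (fun g' => h (i+1) (by omega) g') _

/-- For a cosilting object `M` with associated heart `H_M`, `H⁰_M(M)` is an injective
cogenerator of `H_M`: it is injective with respect to the short exact sequences of the heart
(triangles with all terms in the heart), every nonzero object of the heart admits a nonzero
morphism to it, and `Hom_{H_M}(N, H⁰_M(M)) ≅ Hom_T(N, M)` for every `N` in the heart. -/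
theorem stmt19 (M : C) (hM : IsCosilting M)
    (d : TruncationFunctors (leftPerpLE M) (leftPerpGT M)) :
    (∀ (T : Triangle C), (T ∈ distTriang C) → T.obj₁ ∈ heart (leftPerpLE M) (leftPerpGT M) →
      T.obj₂ ∈ heart (leftPerpLE M) (leftPerpGT M) →
      T.obj₃ ∈ heart (leftPerpLE M) (leftPerpGT M) →
      ∀ φ : T.obj₁ ⟶ (H0 d).obj M, ∃ ψ : T.obj₂ ⟶ (H0 d).obj M, T.mor₁ ≫ ψ = φ) ∧
    (∀ N ∈ heart (leftPerpLE M) (leftPerpGT M),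
      ¬ IsZero N → ∃ φ : N ⟶ (H0 d).obj M, φ ≠ 0) ∧
    (∀ N ∈ heart (leftPerpLE M) (leftPerpGT M),
      Nonempty ((N ⟶ (H0 d).obj M) ≃+ (N ⟶ M))) := by
  obtain ⟨tp, hshift, hMV⟩ := hM
  set Tr : Triangle C := Triangle.mk (d.ι.app (M⟦(1:ℤ)⟧)) (d.π.app (M⟦(1:ℤ)⟧))
    (d.δ (M⟦(1:ℤ)⟧)) with hTrdef
  have hTr : Tr ∈ distTriang C := d.triangle _
  set T2 : Triangle C := (CategoryTheory.shiftFunctor (Triangle C) (-1:ℤ)).obj Tr with hT2def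
  have hT2 : T2 ∈ distTriang C := Triangle.shift_distinguished Tr hTr (-1)
  set A : C := (shiftFunctor C (-1:ℤ)).obj (d.u.obj (M⟦(1:ℤ)⟧)) with hAdef
  set e : (shiftFunctor C (-1:ℤ)).obj ((shiftFunctor C (1:ℤ)).obj M) ≅ M :=
    (shiftFunctorCompIsoId C (1:ℤ) (-1:ℤ) (by omega)).app M with hedef
  have hV : Tr.obj₃ ∈ leftPerpGT M := d.mem_v _
  -- vanishing of maps from heart-objects into `T2.obj₃` and its `-1`-shift
  have hvan1 : ∀ (N : C), N⟦(1:ℤ)⟧ ∈ leftPerpLE M → ∀ f : N ⟶ T2.obj₃, f = 0 := by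
    intro N hN f
    exact hom_to_neg_shift_zero (fun g => tp.hom_zero hN hV g) f
  have hvan2 : ∀ (N : C), N⟦(1:ℤ)⟧ ∈ leftPerpLE M →
      ∀ f : N ⟶ T2.obj₃⟦(-1:ℤ)⟧, f = 0 := by
    intro N hN f
    refine hom_to_neg_shift_zero (fun g => ?_) f
    exact hvan1 (N⟦(1:ℤ)⟧) (hshift _ hN) g
  -- exactness properties of `T2.mor₁ : A ⟶ (M⟦1⟧)⟦-1⟧`
  have hsurj : ∀ (N : C), N⟦(1:ℤ)⟧ ∈ leftPerpLE M → ∀ f : N ⟶ T2.obj₂,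
      ∃ g : N ⟶ T2.obj₁, f = g ≫ T2.mor₁ := by
    intro N hN f
    exact Triangle.coyoneda_exact₂ T2 hT2 f
      (hvan1 N hN (f ≫ T2.mor₂) ▸ rfl)
  have hinj : ∀ (N : C), N⟦(1:ℤ)⟧ ∈ leftPerpLE M → ∀ g : N ⟶ T2.obj₁,
      g ≫ T2.mor₁ = 0 → g = 0 := by
    intro N hN g hg
    obtain ⟨h, hh⟩ := Triangle.coyoneda_exact₂ _ (inv_rot_of_distTriang _ hT2) g hg
    rw [hh]
    obtain rfl := hvan2 N hN h
    exact zero_comp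
  -- `A ∈ 𝒱`
  have hA : T2.obj₁ ∈ leftPerpGT M := by
    intro i hi f
    obtain ⟨g, hg⟩ := Triangle.yoneda_exact₂ _ (inv_rot_of_distTriang _ hT2) f
      ((leftPerpGT_shift_neg (leftPerpGT_shift_neg hV)) i hi _)
    have hg0 : g = 0 := by
      have h0 : e.inv ≫ g = 0 := hMV i hi (e.inv ≫ g)
      have h1 := congrArg (fun x => e.hom ≫ x) h0
      exact (cancel_epi e.inv).1 (h0.trans comp_zero.symm)
    rw [hg, hg0]
    exact comp_zero
  -- `π.app A` is an isomorphism
  obtain ⟨gπ, hgπ⟩ := (d.adj_v A A hA).2 (𝟙 A)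
  have hgπ' : d.π.app A ≫ gπ = 𝟙 A := hgπ
  have hgπ2 : gπ ≫ d.π.app A = 𝟙 (d.v.obj A) := by
    apply (d.adj_v A (d.v.obj A) (d.mem_v A)).1
    show d.π.app A ≫ gπ ≫ d.π.app A = d.π.app A ≫ 𝟙 (d.v.obj A)
    calc d.π.app A ≫ gπ ≫ d.π.app A
        = (d.π.app A ≫ gπ) ≫ d.π.app A := (Category.assoc _ _ _).symm
      _ = 𝟙 A ≫ d.π.app A := by rw [hgπ']
      _ = d.π.app A ≫ 𝟙 (d.v.obj A) := (Category.id_comp _).trans (Category.comp_id _).symm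
  -- the comparison morphism `β : H⁰(M) ⟶ M`
    -- (`T2.mor₁ : A ⟶ (M⟦1⟧)⟦-1⟧` by definitional unfolding)
  set β : (H0 d).obj M ⟶ M := gπ ≫ T2.mor₁ ≫ e.hom with hβdef
  -- key bijection
  have key : ∀ N : C, N ∈ heart (leftPerpLE M) (leftPerpGT M) →
      Function.Bijective (fun ψ : N ⟶ (H0 d).obj M => ψ ≫ β) := by
    intro N hN
    constructor
    · intro ψ₁ ψ₂ h12
      have h0 : (ψ₁ - ψ₂) ≫ β = 0 := by
        rw [Preadditive.sub_comp]
        rw [show ψ₁ ≫ β = ψ₂ ≫ β from h12, sub_self]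
      have h1 : ((ψ₁ - ψ₂) ≫ gπ) ≫ T2.mor₁ = 0 := by
        have h5 : (((ψ₁ - ψ₂) ≫ gπ) ≫ T2.mor₁) ≫ e.hom = 0 := by
          calc (((ψ₁ - ψ₂) ≫ gπ) ≫ T2.mor₁) ≫ e.hom
              = (ψ₁ - ψ₂) ≫ gπ ≫ T2.mor₁ ≫ e.hom :=
                (Category.assoc _ _ _).trans (Category.assoc _ _ _)
            _ = 0 := h0
        exact (cancel_mono e.hom).1 (h5.trans zero_comp.symm)
      have h2 : ((ψ₁ - ψ₂) ≫ gπ : N ⟶ A) = 0 := hinj N hN.1 ((ψ₁ - ψ₂) ≫ gπ : N ⟶ A) h1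
      have h6 : (ψ₁ - ψ₂) ≫ gπ ≫ d.π.app A = 0 := by
        exact (Category.assoc _ _ _).symm.trans
          ((congrArg (fun x : N ⟶ A => x ≫ d.π.app A) h2).trans zero_comp)
      have h8 : (ψ₁ - ψ₂) ≫ 𝟙 ((H0 d).obj M) = 0 := by
        rw [show (𝟙 ((H0 d).obj M) : (H0 d).obj M ⟶ (H0 d).obj M) = gπ ≫ d.π.app A
          from hgπ2.symm]
        exact h6
      rw [Category.comp_id] at h8
      exact sub_eq_zero.1 h8
    · intro f
      obtain ⟨g, hg⟩ := hsurj N hN.1 (f ≫ e.inv)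
      refine ⟨g ≫ d.π.app A, ?_⟩
      show (g ≫ d.π.app A) ≫ gπ ≫ T2.mor₁ ≫ e.hom = f
      calc (g ≫ d.π.app A) ≫ gπ ≫ T2.mor₁ ≫ e.hom
          = ((g ≫ d.π.app A) ≫ gπ) ≫ T2.mor₁ ≫ e.hom := (Category.assoc _ _ _).symm
        _ = (g ≫ d.π.app A ≫ gπ) ≫ T2.mor₁ ≫ e.hom := by
            rw [Category.assoc g (d.π.app A) gπ]
        _ = (g ≫ 𝟙 A) ≫ T2.mor₁ ≫ e.hom :=
            congrArg (fun x => (g ≫ x) ≫ T2.mor₁ ≫ e.hom) hgπ'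
        _ = g ≫ T2.mor₁ ≫ e.hom :=
            congrArg (fun x => x ≫ T2.mor₁ ≫ e.hom) (Category.comp_id g)
        _ = (g ≫ T2.mor₁) ≫ e.hom := (Category.assoc _ _ _).symm
        _ = (f ≫ e.inv) ≫ e.hom := congrArg (· ≫ e.hom) hg.symm
        _ = f ≫ e.inv ≫ e.hom := Category.assoc _ _ _
        _ = f ≫ 𝟙 M := by rw [e.inv_hom_id]
        _ = f := Category.comp_id _
  refine ⟨?_, ?_, ?_⟩
  · -- injectivity of `H⁰(M)` with respect to short exact sequences of the heart
    intro T hT h1 h2 h3 φ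
    have hvan : (Triangle.invRotate T).mor₁ ≫ (φ ≫ β) = 0 :=
      hom_from_neg_shift_zero (fun g => h3.2 1 one_pos g) _
    obtain ⟨g, hg⟩ := Triangle.yoneda_exact₂ _ (inv_rot_of_distTriang _ hT) (φ ≫ β) hvan
    obtain ⟨ψ, hψ⟩ := (key T.obj₂ h2).2 g
    refine ⟨ψ, (key T.obj₁ h1).1 ?_⟩
    show (T.mor₁ ≫ ψ) ≫ β = φ ≫ β
    rw [Category.assoc, show ψ ≫ β = g from hψ]
    exact hg.symm
  · -- cogeneration
    intro N hN hNz
    by_contra hc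
    push_neg at hc
    have hHomM : ∀ f : N ⟶ M, f = 0 := by
      intro f
      obtain ⟨ψ, hψ⟩ := (key N hN).2 f
      rw [← hψ]
      show ψ ≫ β = 0
      rw [hc ψ, zero_comp]
    have hNU : N ∈ leftPerpLE M := by
      intro i hi f
      rcases lt_or_eq_of_le hi with hlt | heq
      · exact leftPerpLE_hom_neg hN.1 hlt f
      · subst heq
        set e0 : M⟦(0:ℤ)⟧ ≅ M := (shiftFunctorZero C ℤ).app M with he0
        have h0 : f ≫ e0.hom = 0 := hHomM (f ≫ e0.hom)
        rw [← Category.comp_id f, ← e0.hom_inv_id, ← Category.assoc, h0, zero_comp]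
    exact hNz ((Limits.IsZero.iff_id_eq_zero N).2 (tp.hom_zero hNU hN.2 (𝟙 N)))
  · -- the Hom-group isomorphism
    intro N hN
    exact ⟨AddEquiv.mk' (Equiv.ofBijective _ (key N hN))
      (fun ψ₁ ψ₂ => Preadditive.add_comp _ _ _ _ _ _)⟩
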